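/- For every even n with n ≥ 6, the Weyl group W(Bₙ) = V ⋊ Sₙ cannot be expressed as a direct product of two nontrivial groups: there do not exist groups H₁ and H₂, each having more than one element, with W(Bₙ) isomorphic to H₁ × H₂. -/

import Mathlib

open Multiplicative

abbrev Vn (n : ℕ) := Multiplicative (Fin n → ZMod 2)

def permAut (n : ℕ) : Equiv.Perm (Fin n) →* MulAut (Vn n) where
  toFun σ :=
    { toFun := fun v => ofAdd fun i => toAdd v (σ⁻¹ i)
      invFun := fun v => ofAdd fun i => toAdd v (σ i)
      left_inv := fun v => by simp
      right_inv := fun v => by simp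
      map_mul' := fun v w => rfl }
  map_one' := rfl
  map_mul' := fun σ τ => rfl

@[simp] lemma permAut_apply (n : ℕ) (σ : Equiv.Perm (Fin n)) (v : Vn n) (i : Fin n) :
    toAdd (permAut n σ v) i = toAdd v (σ⁻¹ i) := rfl

def Ve (n : ℕ) : Subgroup (Vn n) where
  carrier := {v | ∑ i, toAdd v i = 0}
  one_mem' := by simp
  mul_mem' := by
    intro a b ha hb
    simp only [Set.mem_setOf_eq, toAdd_mul, Pi.add_apply, Finset.sum_add_distrib] at *
    rw [ha, hb, add_zero]
  inv_mem' := by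
    intro a ha
    simp only [Set.mem_setOf_eq, toAdd_inv, Pi.neg_apply, Finset.sum_neg_distrib] at *
    rw [ha, neg_zero]

lemma permAut_mem_Ve {n : ℕ} (σ : Equiv.Perm (Fin n)) {v : Vn n} (hv : v ∈ Ve n) :
    permAut n σ v ∈ Ve n := by
  have h : ∑ i, toAdd v (σ⁻¹ i) = ∑ i, toAdd v i := Equiv.sum_comp σ⁻¹ (toAdd v)
  show ∑ i, toAdd (permAut n σ v) i = 0
  show ∑ i, toAdd v (σ⁻¹ i) = 0
  rw [h]
  exact hv

def permAutVe (n : ℕ) : Equiv.Perm (Fin n) →* MulAut (Ve n) where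
  toFun σ :=
    { toFun := fun v => ⟨permAut n σ (v : Vn n), permAut_mem_Ve σ v.2⟩
      invFun := fun v => ⟨permAut n σ⁻¹ (v : Vn n), permAut_mem_Ve σ⁻¹ v.2⟩
      left_inv := fun v => Subtype.ext <| Multiplicative.toAdd.injective <| funext fun i => by simp
      right_inv := fun v => Subtype.ext <| Multiplicative.toAdd.injective <| funext fun i => by simp
      map_mul' := fun v w => Subtype.ext (map_mul (permAut n σ) (v : Vn n) (w : Vn n)) }
  map_one' := rfl
  map_mul' := fun σ τ => rfl

/-- The Weyl group of `Bₙ` (equivalently `Cₙ`). -/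
abbrev WB (n : ℕ) := Vn n ⋊[permAut n] Equiv.Perm (Fin n)

/-- The Weyl group of `Dₙ`. -/
abbrev WD (n : ℕ) := Ve n ⋊[permAutVe n] Equiv.Perm (Fin n)

open SemidirectProduct

section Aux
variable {n : ℕ}

lemma zmod2_cases (x : ZMod 2) : x = 0 ∨ x = 1 := by revert x; decide

/-- all-ones vector -/
abbrev allOnes (n : ℕ) : Vn n := ofAdd (fun _ => (1 : ZMod 2))

abbrev pairVec (a b : Fin n) : Vn n := ofAdd (Pi.single a 1 + Pi.single b 1)

lemma exists_perm_maps {α : Type*} [DecidableEq α] {i j a b : α} (hij : i ≠ j) (hab : a ≠ b) :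
    ∃ σ : Equiv.Perm α, σ i = a ∧ σ j = b := by
  set j' := Equiv.swap i a j with hj'
  have haj' : a ≠ j' := by
    rcases eq_or_ne j a with rfl | h
    · rw [hj', Equiv.swap_apply_right]
      exact hij.symm
    · rw [hj', Equiv.swap_apply_of_ne_of_ne hij.symm h]
      exact h.symm
  refine ⟨(Equiv.swap i a).trans (Equiv.swap j' b), ?_, ?_⟩
  · rw [Equiv.trans_apply, Equiv.swap_apply_left,
      Equiv.swap_apply_of_ne_of_ne haj' hab]
  · rw [Equiv.trans_apply, ← hj', Equiv.swap_apply_left]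

lemma conj_inl_mem (N : Subgroup (WB n)) (hnorm : N.Normal)
    (σ : Equiv.Perm (Fin n)) {w : Vn n} (hw : (inl w : WB n) ∈ N) :
    (inl (permAut n σ w) : WB n) ∈ N := by
  rw [SemidirectProduct.inl_aut]
  simpa using hnorm.conj_mem _ hw (inr σ)

lemma odd_cast_zmod2 {m : ℕ} (hm : Odd m) : ((m : ZMod 2)) = 1 := by
  obtain ⟨c, hc⟩ := hm
  subst hc
  push_cast
  have : (2 : ZMod 2) = 0 := by decide
  rw [this]; ring

lemma normal_contains_allOnes (hn2 : 2 ≤ n) (heven : Even n)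
    (N : Subgroup (WB n)) (hnorm : N.Normal) (hN : N ≠ ⊥) :
    (inl (allOnes n) : WB n) ∈ N := by
  classical
  by_cases hV : ∃ v : Vn n, v ≠ 1 ∧ (inl v : WB n) ∈ N
  · obtain ⟨v, hv1, hvN⟩ := hV
    by_cases hall : toAdd v = fun _ => (1 : ZMod 2)
    · have : v = allOnes n := by
        apply Multiplicative.toAdd.injective; exact hall
      rwa [this] at hvN
    · -- v has a 1-coordinate and a 0-coordinate
      obtain ⟨i, hi⟩ : ∃ i, toAdd v i = 1 := by
        by_contra h
        push_neg at h
        apply hv1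
        apply Multiplicative.toAdd.injective
        funext k
        rcases zmod2_cases (toAdd v k) with h0 | h1
        · exact h0
        · exact absurd h1 (h k)
      obtain ⟨j, hj⟩ : ∃ j, toAdd v j = 0 := by
        by_contra h
        push_neg at h
        apply hall
        funext k
        rcases zmod2_cases (toAdd v k) with h0 | h1
        · exact absurd h0 (h k)
        · exact h1
      have hij : i ≠ j := by rintro rfl; rw [hi] at hj; exact one_ne_zero hj
      -- w = pairVec i j ∈ N
      have hwN : (inl (pairVec i j) : WB n) ∈ N := by
        have h1 : (inl (permAut n (Equiv.swap i j) v * v⁻¹) : WB n) ∈ N :=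
          N.mul_mem (conj_inl_mem N hnorm _ hvN) (N.inv_mem hvN)
        have h2 : permAut n (Equiv.swap i j) v * v⁻¹ = pairVec i j := by
          apply Multiplicative.toAdd.injective
          funext k
          show toAdd v ((Equiv.swap i j)⁻¹ k) + (- toAdd v k)
            = (Pi.single i 1 + Pi.single j 1 : Fin n → ZMod 2) k
          rw [Equiv.swap_inv]
          rcases eq_or_ne k i with rfl | hki
          · rw [Equiv.swap_apply_left, hj, hi, Pi.add_apply, Pi.single_eq_same,
              Pi.single_eq_of_ne hij]
            decide
          · rcases eq_or_ne k j with rfl | hkj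
            · rw [Equiv.swap_apply_right, hi, hj, Pi.add_apply,
                Pi.single_eq_of_ne hij.symm, Pi.single_eq_same]
              decide
            · rw [Equiv.swap_apply_of_ne_of_ne hki hkj, Pi.add_apply,
                Pi.single_eq_of_ne hki, Pi.single_eq_of_ne hkj]
              simp
              rcases zmod2_cases (toAdd v k) with h0 | h0 <;> rw [h0] <;> decide
        rwa [h2] at h1
      -- all pairs in N
      have hpairs : ∀ a b : Fin n, a ≠ b → (inl (pairVec a b) : WB n) ∈ N := by
        intro a b hab
        obtain ⟨σ, hσi, hσj⟩ := exists_perm_maps hij hab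
        have := conj_inl_mem N hnorm σ hwN
        have heq : permAut n σ (pairVec i j) = pairVec a b := by
          apply Multiplicative.toAdd.injective
          funext k
          show (Pi.single i 1 + Pi.single j 1 : Fin n → ZMod 2) (σ⁻¹ k)
            = (Pi.single a 1 + Pi.single b 1 : Fin n → ZMod 2) k
          simp only [Pi.add_apply, Pi.single_apply, Equiv.Perm.inv_eq_iff_eq, hσi, hσj,
            toAdd_ofAdd]
        rwa [heq] at this
      -- product of pairs (i0, k) for k ≠ i0 gives allOnes
      set i0 : Fin n := ⟨0, by omega⟩ with hi0
      have hcard : (Finset.univ.erase i0).card = n - 1 := by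
        rw [Finset.card_erase_of_mem (Finset.mem_univ _)]
        simp
      have hsum : (∑ k ∈ Finset.univ.erase i0,
          (Pi.single i0 1 + Pi.single k 1 : Fin n → ZMod 2)) = fun _ => 1 := by
        funext x
        rw [Finset.sum_apply]
        simp only [Pi.add_apply]
        rw [Finset.sum_add_distrib, Finset.sum_const, hcard]
        have h2 : ∑ k ∈ Finset.univ.erase i0, Pi.single k (1:ZMod 2) x
            = if x ∈ Finset.univ.erase i0 then 1 else 0 := by
          simp only [Pi.single_apply]
          exact Finset.sum_ite_eq (Finset.univ.erase i0) x (fun _ => 1)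
        rw [h2]
        rcases eq_or_ne x i0 with rfl | hx
        · rw [Pi.single_eq_same, if_neg (by simp)]
          rw [nsmul_eq_mul, odd_cast_zmod2 (Nat.Even.sub_odd (by omega) heven odd_one)]
          ring
        · rw [Pi.single_eq_of_ne hx, if_pos (by simp [hx])]
          simp
      have hprod : (∏ k ∈ Finset.univ.erase i0, pairVec i0 k)
          ∈ Subgroup.comap (inl : Vn n →* WB n) N := by
        apply Subgroup.prod_mem
        intro k hk
        exact Subgroup.mem_comap.mpr (hpairs i0 k (Finset.ne_of_mem_erase hk).symm)
      have hprodeq : (∏ k ∈ Finset.univ.erase i0, pairVec i0 k) = allOnes n := by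
        apply Multiplicative.toAdd.injective
        rw [toAdd_prod]
        exact hsum
      rw [hprodeq] at hprod
      exact Subgroup.mem_comap.mp hprod
  · -- no nontrivial vector in N : contradiction
    push_neg at hV
    have hV' : ∀ v : Vn n, (inl v : WB n) ∈ N → v = 1 := by
      intro v hv
      by_contra h
      exact hV v h hv
    exfalso
    obtain ⟨⟨g, hgN⟩, hg1⟩ := Subgroup.ne_bot_iff_exists_ne_one.mp hN
    have hg1' : g ≠ 1 := by simpa [Subtype.ext_iff] using hg1
    have hright : g.right = 1 := by
      by_contra hσ
      obtain ⟨i, hi⟩ : ∃ i, g.right i ≠ i := by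
        by_contra h
        push_neg at h
        exact hσ (Equiv.ext h)
      set u : Vn n := ofAdd (Pi.single i (1 : ZMod 2)) with hu
      have hcN : g * (inl u * g⁻¹ * (inl u)⁻¹) ∈ N :=
        N.mul_mem hgN (by simpa using hnorm.conj_mem _ (N.inv_mem hgN) (inl u))
      have hcright : (g * (inl u * g⁻¹ * (inl u)⁻¹)).right = 1 := by
        simp
      have hc : g * (inl u * g⁻¹ * (inl u)⁻¹)
          = inl ((g * (inl u * g⁻¹ * (inl u)⁻¹)).left) := by
        ext
        · simp
        · simp [hcright]
      have h1 : (g * (inl u * g⁻¹ * (inl u)⁻¹)).left = 1 := hV' _ (hc ▸ hcN)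
      have hcomm : g * inl u = inl u * g := by
        have hone : g * (inl u * g⁻¹ * (inl u)⁻¹) = 1 := by
          rw [hc, h1, map_one]
        have h2 : g * inl u * g⁻¹ * (inl u)⁻¹ = 1 := by
          rw [← hone]; group
        calc g * inl u = (g * inl u * g⁻¹ * (inl u)⁻¹) * (inl u * g) := by group
          _ = inl u * g := by rw [h2, one_mul]
      have hleft := congrArg SemidirectProduct.left hcomm
      simp only [mul_left, left_inl, right_inl, map_one, MulAut.one_apply] at hleft
      -- hleft : g.left * permAut n g.right u = u * g.left
      have : permAut n g.right u = u := by
        have := hleft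
        rw [mul_comm (u) (g.left)] at this
        exact mul_left_cancel this
      have := congrArg (fun w : Vn n => toAdd w (g.right i)) this
      simp only [permAut_apply, Equiv.Perm.inv_def, Equiv.symm_apply_apply] at this
      rw [hu] at this
      have h2 : (1 : ZMod 2) = if g.right i = i then 1 else 0 := by
        simpa [Pi.single_apply] using this
      rw [if_neg hi] at h2
      exact one_ne_zero h2
    have : g = inl g.left := by
      ext
      · simp
      · simp [hright]
    exact hg1' (by rw [this, hV' g.left (this ▸ hgN), map_one])
end Aux

/-- For every even `n ≥ 6`, the Weyl group `W(Bₙ) = V ⋊ Sₙ` cannot be expressed as a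
direct product of two nontrivial groups. -/
theorem weylB_not_product (n : ℕ) (hn : 6 ≤ n) (heven : Even n)
    (H₁ H₂ : Type*) [Group H₁] [Group H₂] (h₁ : Nontrivial H₁) (h₂ : Nontrivial H₂) :
    ¬ Nonempty (WB n ≃* H₁ × H₂) := by
  rintro ⟨e⟩
  classical
  set N₁ : Subgroup (WB n) := ((MonoidHom.snd H₁ H₂).comp e.toMonoidHom).ker with hN₁def
  set N₂ : Subgroup (WB n) := ((MonoidHom.fst H₁ H₂).comp e.toMonoidHom).ker with hN₂def
  have hnorm₁ : N₁.Normal := MonoidHom.normal_ker _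
  have hnorm₂ : N₂.Normal := MonoidHom.normal_ker _
  have hne₁ : N₁ ≠ ⊥ := by
    obtain ⟨a, ha⟩ := exists_ne (1 : H₁)
    intro hbot
    have hmem : e.symm (a, 1) ∈ N₁ := by
      simp [hN₁def, MonoidHom.mem_ker, Subgroup.mem_prod]
    rw [hbot, Subgroup.mem_bot] at hmem
    apply ha
    have := congrArg e hmem
    simp only [MulEquiv.apply_symm_apply, map_one] at this
    exact (Prod.mk.injEq _ _ _ _ ▸ this).1
  have hne₂ : N₂ ≠ ⊥ := by
    obtain ⟨b, hb⟩ := exists_ne (1 : H₂)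
    intro hbot
    have hmem : e.symm (1, b) ∈ N₂ := by
      simp [hN₂def, MonoidHom.mem_ker, Subgroup.mem_prod]
    rw [hbot, Subgroup.mem_bot] at hmem
    apply hb
    have := congrArg e hmem
    simp only [MulEquiv.apply_symm_apply, map_one] at this
    exact (Prod.mk.injEq _ _ _ _ ▸ this).2
  have hz₁ := normal_contains_allOnes (by omega) heven N₁ hnorm₁ hne₁
  have hz₂ := normal_contains_allOnes (by omega) heven N₂ hnorm₂ hne₂
  rw [hN₁def, MonoidHom.mem_ker, MonoidHom.comp_apply] at hz₁
  rw [hN₂def, MonoidHom.mem_ker, MonoidHom.comp_apply] at hz₂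
  have hz : (SemidirectProduct.inl (allOnes n) : WB n) = 1 := by
    apply e.injective
    rw [map_one]
    exact Prod.ext hz₂ hz₁
  have : allOnes n = 1 := SemidirectProduct.inl_injective (by simpa using hz)
  have h0 := congrArg (fun w : Vn n => toAdd w ⟨0, by omega⟩) this
  simp only [toAdd_ofAdd, toAdd_one, Pi.zero_apply] at h0
  exact one_ne_zero h0
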